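/- Let |Ω⟩ = (‖c‖₁/k)·Σ_{α=1}^k |ω_α⟩ where |ω_α⟩ are i.i.d. random unit vectors with E[|ω_α⟩] = |ψ⟩/‖c‖₁ for a unit vector ψ. Then E[⟨Ω|Ω⟩] = 1 + (‖c‖₁² − 1)/k, and the variance satisfies Var[⟨Ω|Ω⟩] ≤ 4(C−1)/k + 2‖c‖₁⁴/k² + O(C/k³), where C = ‖c‖₁²·⟨ψ|σ|ψ⟩ with σ = E[|ω_α⟩⟨ω_α|]. -/

import Mathlib

open Matrix
open scoped ComplexOrder

noncomputable section

/-- The dyad `|L⟩⟨R|` as a matrix. -/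
def dyadM {d : ℕ} (L R : Fin d → ℂ) : Matrix (Fin d) (Fin d) ℂ :=
  Matrix.vecMulVec L (star R)

/-- The pure-state extent `ξ(Ψ)` with respect to a free set `S`. -/
def extent {d : ℕ} (S : Set (Fin d → ℂ)) (Ψ : Fin d → ℂ) : ℝ :=
  sInf {r : ℝ | ∃ (m : ℕ) (c : Fin m → ℂ) (φ : Fin m → (Fin d → ℂ)),
    (∀ j, φ j ∈ S) ∧ Ψ = ∑ j, c j • φ j ∧ r = (∑ j, ‖c j‖) ^ 2}

/-- The dyadic negativity `Λ(ρ)` with respect to a free set `S`. -/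
def dyadicNeg {d : ℕ} (S : Set (Fin d → ℂ)) (ρ : Matrix (Fin d) (Fin d) ℂ) : ℝ :=
  sInf {r : ℝ | ∃ (m : ℕ) (α : Fin m → ℂ) (L R : Fin m → (Fin d → ℂ)),
    (∀ j, L j ∈ S) ∧ (∀ j, R j ∈ S) ∧
    ρ = ∑ j, α j • dyadM (L j) (R j) ∧ r = ∑ j, ‖α j‖}

/-- The generalized robustness `Λ⁺(ρ)`: the maximum of `Tr[Wρ]` over positive
semidefinite witnesses `W` with `⟨φ|W|φ⟩ ≤ 1` for all free `φ`. -/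
def genRob {d : ℕ} (S : Set (Fin d → ℂ)) (ρ : Matrix (Fin d) (Fin d) ℂ) : ℝ :=
  sSup {r : ℝ | ∃ W : Matrix (Fin d) (Fin d) ℂ, W.PosSemidef ∧
    (∀ φ ∈ S, (star φ ⬝ᵥ (W *ᵥ φ)).re ≤ 1) ∧ r = ((W * ρ).trace).re}

/-- The mixed-state extent `Ξ(ρ)`: the convex-roof extension of the extent. -/
def mixedExtent {d : ℕ} (S : Set (Fin d → ℂ)) (ρ : Matrix (Fin d) (Fin d) ℂ) : ℝ :=
  sInf {r : ℝ | ∃ (m : ℕ) (p : Fin m → ℝ) (Ψ : Fin m → (Fin d → ℂ)),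
    (∀ j, 0 ≤ p j) ∧ (∑ j, p j) = 1 ∧ (∀ j, star (Ψ j) ⬝ᵥ Ψ j = 1) ∧
    ρ = ∑ j, (p j : ℂ) • dyadM (Ψ j) (Ψ j) ∧ r = ∑ j, p j * extent S (Ψ j)}

/-- The squared Euclidean norm `⟨w|w⟩` of a complex vector. -/
def nsq {d : ℕ} (w : Fin d → ℂ) : ℝ := (star w ⬝ᵥ w).re

/-- The random sparsified vector `|Ω⟩ = (‖c‖₁/k)·Σ_α |ω_α⟩`, for the outcome in
which the `α`-th sample takes the value `v (g α)`. -/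
def sparseVec {d : ℕ} {J : Type*} (c1 : ℝ) (k : ℕ) (v : J → Fin d → ℂ)
    (g : Fin k → J) : Fin d → ℂ :=
  ((c1 : ℂ) / (k : ℂ)) • ∑ α, v (g α)

/-- The probability of the i.i.d. outcome `g` under the single-sample
distribution `p`. -/
def prodProb {J : Type*} (p : J → ℝ) {k : ℕ} (g : Fin k → J) : ℝ := ∏ α, p (g α)

/-- The mean `E[⟨Ω|Ω⟩]` of the squared norm of the sparsified vector. -/
def meanNsq {d : ℕ} {J : Type*} [Fintype J] (p : J → ℝ) (c1 : ℝ) (k : ℕ)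
    (v : J → Fin d → ℂ) : ℝ :=
  ∑ g : Fin k → J, prodProb p g * nsq (sparseVec c1 k v g)

/-- The variance `Var[⟨Ω|Ω⟩]` of the squared norm of the sparsified vector. -/
def varNsq {d : ℕ} {J : Type*} [Fintype J] (p : J → ℝ) (c1 : ℝ) (k : ℕ)
    (v : J → Fin d → ℂ) : ℝ :=
  ∑ g : Fin k → J, prodProb p g * (nsq (sparseVec c1 k v g) - meanNsq p c1 k v) ^ 2

/-- The constant `C = ‖c‖₁²·⟨ψ|σ|ψ⟩` with `σ = E[|ω_α⟩⟨ω_α|]`. -/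
def Cconst {d : ℕ} {J : Type*} [Fintype J] (p : J → ℝ) (v : J → Fin d → ℂ)
    (ψ : Fin d → ℂ) (c1 : ℝ) : ℝ :=
  c1 ^ 2 * (star ψ ⬝ᵥ ((∑ j, (p j : ℂ) • dyadM (v j) (v j)) *ᵥ ψ)).re

/-! ### Auxiliary machinery for the sparsification theorem -/

namespace SparsifyAux

variable {J : Type*} [Fintype J]

/-- expectation of `F` under the iid product distribution with marginal `p`. -/
def Ex (p : J → ℝ) {ι : Type*} [Fintype ι] [DecidableEq ι] (F : (ι → J) → ℝ) : ℝ :=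
  ∑ g : ι → J, (∏ γ, p (g γ)) * F g

lemma Ex_congr (p : J → ℝ) {ι : Type*} [Fintype ι] [DecidableEq ι]
    {F G : (ι → J) → ℝ} (h : ∀ g, F g = G g) : Ex p F = Ex p G := by
  unfold Ex; exact Finset.sum_congr rfl fun g _ => by rw [h]

lemma sum_prod_one (p : J → ℝ) (hp1 : ∑ j, p j = 1) {σ : Type*} [Fintype σ] [DecidableEq σ] :
    ∑ h : σ → J, ∏ x, p (h x) = 1 := by
  have h := (Fintype.prod_sum (ι := σ) (κ := fun _ => J) (fun _ j => p j)).symm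
  simpa [hp1] using h

lemma Ex_const (p : J → ℝ) (hp1 : ∑ j, p j = 1) {ι : Type*} [Fintype ι] [DecidableEq ι]
    (c : ℝ) : Ex p (fun _ : ι → J => c) = c := by
  unfold Ex
  rw [← Finset.sum_mul, sum_prod_one p hp1, one_mul]

lemma Ex_peel (p : J → ℝ) {ι : Type*} [Fintype ι] [DecidableEq ι] (a : ι)
    (F : (ι → J) → ℝ) :
    Ex p F = ∑ i, p i * Ex p (fun h : {x : ι // x ≠ a} → J =>
      F (fun x => if hx : x = a then i else h ⟨x, hx⟩)) := by
  unfold Ex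
  rw [← (Equiv.funSplitAt a J).symm.sum_comp
    (fun g => (∏ γ, p (g γ)) * F g), Fintype.sum_prod_type]
  refine Finset.sum_congr rfl fun i _ => ?_
  rw [Finset.mul_sum]
  refine Finset.sum_congr rfl fun h _ => ?_
  have he : (Equiv.funSplitAt a J).symm (i, h) = fun x => if hx : x = a then i else h ⟨x, hx⟩ := by
    funext x
    simp [Equiv.funSplitAt, Equiv.piSplitAt]
  rw [he]
  have hprod : (∏ γ : ι, p (if hx : γ = a then i else h ⟨γ, hx⟩))
      = p i * ∏ x : {x : ι // x ≠ a}, p (h x) := by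
    rw [← Finset.mul_prod_erase _ _ (Finset.mem_univ a), dif_pos rfl]
    congr 1
    rw [Finset.prod_subtype (p := fun x => x ≠ a) (Finset.univ.erase a) (by simp)
      (fun x => p (if hx : x = a then i else h ⟨x, hx⟩))]
    exact Finset.prod_congr rfl fun x _ => by rw [dif_neg x.2]
  rw [hprod]
  ring

lemma Ex_marg1 (p : J → ℝ) (hp1 : ∑ j, p j = 1) {ι : Type*} [Fintype ι] [DecidableEq ι]
    (a : ι) (F : J → ℝ) :
    Ex p (fun g : ι → J => F (g a)) = ∑ i, p i * F i := by
  rw [Ex_peel p a]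
  refine Finset.sum_congr rfl fun i _ => ?_
  rw [Ex_congr p (G := fun _ => F i) (fun h => by beta_reduce; rw [dif_pos rfl]), Ex_const p hp1]

lemma Ex_marg2 (p : J → ℝ) (hp1 : ∑ j, p j = 1) {ι : Type*} [Fintype ι] [DecidableEq ι]
    {a b : ι} (hab : a ≠ b) (F : J → J → ℝ) :
    Ex p (fun g : ι → J => F (g a) (g b)) = ∑ i, ∑ j, p i * (p j * F i j) := by
  have hb : ¬ (b = a) := fun h => hab h.symm
  rw [Ex_peel p a]
  refine Finset.sum_congr rfl fun i _ => ?_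
  rw [Ex_congr p (G := fun h : {x : ι // x ≠ a} → J => F i (h ⟨b, hb⟩))
      (fun h => by beta_reduce; rw [dif_pos rfl, dif_neg hb]),
      Ex_marg1 p hp1 (⟨b, hb⟩ : {x : ι // x ≠ a}) (fun j => F i j), Finset.mul_sum]

lemma Ex_marg3 (p : J → ℝ) (hp1 : ∑ j, p j = 1) {ι : Type*} [Fintype ι] [DecidableEq ι]
    {a b c : ι} (hab : a ≠ b) (hac : a ≠ c) (hbc : b ≠ c) (F : J → J → J → ℝ) :
    Ex p (fun g : ι → J => F (g a) (g b) (g c))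
      = ∑ i, ∑ j, ∑ l, p i * (p j * (p l * F i j l)) := by
  have hb : ¬ (b = a) := fun h => hab h.symm
  have hc : ¬ (c = a) := fun h => hac h.symm
  rw [Ex_peel p a]
  refine Finset.sum_congr rfl fun i _ => ?_
  rw [Ex_congr p (G := fun h : {x : ι // x ≠ a} → J => F i (h ⟨b, hb⟩) (h ⟨c, hc⟩))
      (fun h => by beta_reduce; rw [dif_pos rfl, dif_neg hb, dif_neg hc]),
      Ex_marg2 p hp1 (a := (⟨b, hb⟩ : {x : ι // x ≠ a})) (b := ⟨c, hc⟩)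
        (by simp [Subtype.ext_iff, hbc]) (fun j l => F i j l), Finset.mul_sum]
  exact Finset.sum_congr rfl fun j _ => by rw [Finset.mul_sum]

lemma Ex_marg4 (p : J → ℝ) (hp1 : ∑ j, p j = 1) {ι : Type*} [Fintype ι] [DecidableEq ι]
    {a b c e : ι} (hab : a ≠ b) (hac : a ≠ c) (hae : a ≠ e) (hbc : b ≠ c) (hbe : b ≠ e)
    (hce : c ≠ e) (F : J → J → J → J → ℝ) :
    Ex p (fun g : ι → J => F (g a) (g b) (g c) (g e))
      = ∑ i, ∑ j, ∑ l, ∑ o, p i * (p j * (p l * (p o * F i j l o))) := by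
  have hb : ¬ (b = a) := fun h => hab h.symm
  have hc : ¬ (c = a) := fun h => hac h.symm
  have he : ¬ (e = a) := fun h => hae h.symm
  rw [Ex_peel p a]
  refine Finset.sum_congr rfl fun i _ => ?_
  rw [Ex_congr p
      (G := fun h : {x : ι // x ≠ a} → J => F i (h ⟨b, hb⟩) (h ⟨c, hc⟩) (h ⟨e, he⟩))
      (fun h => by beta_reduce; rw [dif_pos rfl, dif_neg hb, dif_neg hc, dif_neg he]),
      Ex_marg3 p hp1 (a := (⟨b, hb⟩ : {x : ι // x ≠ a})) (b := ⟨c, hc⟩) (c := ⟨e, he⟩)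
        (by simp [Subtype.ext_iff, hbc]) (by simp [Subtype.ext_iff, hbe])
        (by simp [Subtype.ext_iff, hce]) (fun j l o => F i j l o), Finset.mul_sum]
  refine Finset.sum_congr rfl fun j _ => ?_
  rw [Finset.mul_sum]
  exact Finset.sum_congr rfl fun l _ => by rw [Finset.mul_sum]

lemma Ex_mul_left (p : J → ℝ) {ι : Type*} [Fintype ι] [DecidableEq ι]
    (c : ℝ) (F : (ι → J) → ℝ) : Ex p (fun g => c * F g) = c * Ex p F := by
  unfold Ex
  rw [Finset.mul_sum]
  exact Finset.sum_congr rfl fun g _ => by ring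

lemma Ex_sum (p : J → ℝ) {ι : Type*} [Fintype ι] [DecidableEq ι] {τ : Type*}
    (s : Finset τ) (F : τ → (ι → J) → ℝ) :
    Ex p (fun g => ∑ t ∈ s, F t g) = ∑ t ∈ s, Ex p (F t) := by
  unfold Ex
  rw [Finset.sum_comm]
  exact Finset.sum_congr rfl fun g _ => by rw [Finset.mul_sum]

lemma Ex_zero (p : J → ℝ) (hp1 : ∑ j, p j = 1) {ι : Type*} [Fintype ι] [DecidableEq ι] :
    Ex p (fun _ : ι → J => (0:ℝ)) = 0 := Ex_const p hp1 0

/-! ### vector algebra helpers -/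

variable {d : ℕ}

lemma dot_swap (a b : Fin d → ℂ) : (star a ⬝ᵥ b).re = (star b ⬝ᵥ a).re := by
  rw [Matrix.star_dotProduct]
  simp

lemma dot_sum_right {τ : Type*} (s : Finset τ) (u : Fin d → ℂ) (w : τ → Fin d → ℂ) :
    u ⬝ᵥ (∑ t ∈ s, w t) = ∑ t ∈ s, u ⬝ᵥ w t := by
  simp only [dotProduct, Finset.sum_apply, Finset.mul_sum]
  exact Finset.sum_comm

lemma dot_sum_left {τ : Type*} (s : Finset τ) (u : Fin d → ℂ) (w : τ → Fin d → ℂ) :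
    (∑ t ∈ s, w t) ⬝ᵥ u = ∑ t ∈ s, w t ⬝ᵥ u := by
  simp only [dotProduct, Finset.sum_apply, Finset.sum_mul]
  exact Finset.sum_comm

lemma cs_bound (a b : Fin d → ℂ) (ha : nsq a = 1) (hb : nsq b = 1) :
    Complex.normSq (star a ⬝ᵥ b) ≤ 1 := by
  set a' : EuclideanSpace ℂ (Fin d) := (WithLp.equiv 2 _).symm a with ha'
  set b' : EuclideanSpace ℂ (Fin d) := (WithLp.equiv 2 _).symm b with hb'
  have hi : (inner ℂ a' b' : ℂ) = star a ⬝ᵥ b :=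
    (EuclideanSpace.inner_toLp_toLp a b).trans (dotProduct_comm _ _)
  have hia : (inner ℂ a' a' : ℂ) = star a ⬝ᵥ a :=
    (EuclideanSpace.inner_toLp_toLp a a).trans (dotProduct_comm _ _)
  have hib : (inner ℂ b' b' : ℂ) = star b ⬝ᵥ b :=
    (EuclideanSpace.inner_toLp_toLp b b).trans (dotProduct_comm _ _)
  have hna : ‖a'‖ ^ 2 = 1 := by
    rw [← inner_self_eq_norm_sq (𝕜 := ℂ) a', hia]; exact ha
  have hnb : ‖b'‖ ^ 2 = 1 := by
    rw [← inner_self_eq_norm_sq (𝕜 := ℂ) b', hib]; exact hb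
  have hcs : ‖(inner ℂ a' b' : ℂ)‖ ≤ ‖a'‖ * ‖b'‖ := norm_inner_le_norm a' b'
  have h2 : ‖(inner ℂ a' b' : ℂ)‖ ^ 2 ≤ (‖a'‖ * ‖b'‖) ^ 2 := by
    apply pow_le_pow_left₀ (norm_nonneg _) hcs
  rw [mul_pow, hna, hnb, hi] at h2
  calc Complex.normSq (star a ⬝ᵥ b) = ‖star a ⬝ᵥ b‖ ^ 2 := by
        rw [Complex.sq_norm]
    _ ≤ 1 := by simpa using h2

lemma re_sq_le_normSq (z : ℂ) : z.re ^ 2 ≤ Complex.normSq z := by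
  rw [Complex.normSq_apply]
  nlinarith [sq_nonneg z.im]

/-! ### the basic scalar data -/

def fdot (v : J → Fin d → ℂ) (i j : J) : ℝ := (star (v i) ⬝ᵥ v j).re

def Yc (v : J → Fin d → ℂ) (c1 : ℝ) (i j : J) : ℝ := fdot v i j - (c1 ^ 2)⁻¹

def rr (v : J → Fin d → ℂ) (ψ : Fin d → ℂ) (i : J) : ℝ := (star ψ ⬝ᵥ v i).re

def uY (p : J → ℝ) (v : J → Fin d → ℂ) (c1 : ℝ) (i : J) : ℝ := ∑ j, p j * Yc v c1 j i

def Aq (p : J → ℝ) (v : J → Fin d → ℂ) (c1 : ℝ) : ℝ := ∑ i, p i * uY p v c1 i ^ 2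

def Bq (p : J → ℝ) (v : J → Fin d → ℂ) (c1 : ℝ) : ℝ :=
  ∑ i, ∑ j, p i * (p j * Yc v c1 i j ^ 2)

def Zf (v : J → Fin d → ℂ) (c1 : ℝ) {k : ℕ} (g : Fin k → J) (q : Fin k × Fin k) : ℝ :=
  if q.1 = q.2 then 0 else Yc v c1 (g q.1) (g q.2)

def Gb (p : J → ℝ) (v : J → Fin d → ℂ) (c1 : ℝ) {k : ℕ} (q r : Fin k × Fin k) : ℝ :=
  ((if q.1 = r.1 then (1:ℝ) else 0) + (if q.1 = r.2 then 1 else 0)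
      + (if q.2 = r.1 then 1 else 0) + (if q.2 = r.2 then 1 else 0)) * Aq p v c1
    + ((if q = r then (1:ℝ) else 0) + (if q = (r.2, r.1) then 1 else 0)) * Bq p v c1

section scalarFacts

variable (p : J → ℝ) (v : J → Fin d → ℂ) (ψ : Fin d → ℂ) (c1 : ℝ)

lemma fdot_symm (i j : J) : fdot v i j = fdot v j i := dot_swap _ _

lemma Yc_symm (i j : J) : Yc v c1 i j = Yc v c1 j i := by
  unfold Yc; rw [fdot_symm]

variable (hp1 : ∑ j, p j = 1) (hv : ∀ j, nsq (v j) = 1) (hψ : nsq ψ = 1)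
  (hmean : ∑ j, (p j : ℂ) • v j = ((c1 : ℂ))⁻¹ • ψ)

include hv in
lemma fdot_diag (i : J) : fdot v i i = 1 := hv i

include hmean in
lemma sum_p_fdot (i : J) : ∑ j, p j * fdot v i j = c1⁻¹ * rr v ψ i := by
  have h1 : star (v i) ⬝ᵥ (∑ j, (p j : ℂ) • v j) = star (v i) ⬝ᵥ (((c1 : ℂ))⁻¹ • ψ) := by
    rw [hmean]
  rw [dot_sum_right] at h1
  have h2 : ∀ j : J, star (v i) ⬝ᵥ ((p j : ℂ) • v j) = (p j : ℂ) * (star (v i) ⬝ᵥ v j) := by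
    intro j; rw [dotProduct_smul]; rfl
  rw [Finset.sum_congr rfl fun j _ => h2 j, dotProduct_smul] at h1
  have h3 := congrArg Complex.re h1
  rw [Complex.re_sum] at h3
  simp only [Complex.re_ofReal_mul] at h3
  have h4 : ((c1 : ℂ)⁻¹ • (star (v i) ⬝ᵥ ψ)).re = c1⁻¹ * (star (v i) ⬝ᵥ ψ).re := by
    rw [smul_eq_mul, ← Complex.ofReal_inv, Complex.re_ofReal_mul]
  rw [h4] at h3
  rw [show (∑ j, p j * fdot v i j) = ∑ j, p j * (star (v i) ⬝ᵥ v j).re from rfl, h3,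
    show rr v ψ i = (star (v i) ⬝ᵥ ψ).re from (dot_swap _ _).symm]

include hψ hmean in
lemma sum_p_rr : ∑ j, p j * rr v ψ j = c1⁻¹ := by
  have h1 : star ψ ⬝ᵥ (∑ j, (p j : ℂ) • v j) = star ψ ⬝ᵥ (((c1 : ℂ))⁻¹ • ψ) := by rw [hmean]
  rw [dot_sum_right] at h1
  have h2 : ∀ j : J, star ψ ⬝ᵥ ((p j : ℂ) • v j) = (p j : ℂ) * (star ψ ⬝ᵥ v j) := by
    intro j; rw [dotProduct_smul]; rfl
  rw [Finset.sum_congr rfl fun j _ => h2 j, dotProduct_smul] at h1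
  have h3 := congrArg Complex.re h1
  rw [Complex.re_sum] at h3
  simp only [Complex.re_ofReal_mul] at h3
  have h4 : ((c1 : ℂ)⁻¹ • (star ψ ⬝ᵥ ψ)).re = c1⁻¹ * (star ψ ⬝ᵥ ψ).re := by
    rw [smul_eq_mul, ← Complex.ofReal_inv, Complex.re_ofReal_mul]
  rw [h4] at h3
  rw [show (∑ j, p j * rr v ψ j) = ∑ j, p j * (star ψ ⬝ᵥ v j).re from rfl, h3,
    show (star ψ ⬝ᵥ ψ).re = 1 from hψ, mul_one]

include hp1 hmean in
lemma sum_p_Yrow (i : J) :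
    ∑ j, p j * Yc v c1 i j = c1⁻¹ * rr v ψ i - (c1 ^ 2)⁻¹ := by
  have : ∀ j : J, p j * Yc v c1 i j = p j * fdot v i j - (c1 ^ 2)⁻¹ * p j := by
    intro j; unfold Yc; ring
  rw [Finset.sum_congr rfl fun j _ => this j, Finset.sum_sub_distrib, ← Finset.mul_sum, hp1,
    sum_p_fdot p v ψ c1 hmean i, mul_one]

include hp1 hmean in
lemma uY_eq (i : J) : uY p v c1 i = c1⁻¹ * rr v ψ i - (c1 ^ 2)⁻¹ := by
  unfold uY
  rw [Finset.sum_congr rfl fun j _ => by rw [Yc_symm]]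
  exact sum_p_Yrow p v ψ c1 hp1 hmean i

include hp1 hψ hmean in
lemma sum_p_uY : ∑ i, p i * uY p v c1 i = 0 := by
  rw [Finset.sum_congr rfl fun i _ => by rw [uY_eq p v ψ c1 hp1 hmean i]]
  have : ∀ i : J, p i * (c1⁻¹ * rr v ψ i - (c1 ^ 2)⁻¹)
      = c1⁻¹ * (p i * rr v ψ i) - (c1 ^ 2)⁻¹ * p i := by intro i; ring
  rw [Finset.sum_congr rfl fun i _ => this i, Finset.sum_sub_distrib, ← Finset.mul_sum,
    ← Finset.mul_sum, sum_p_rr p v ψ c1 hψ hmean, hp1, mul_one, sq, mul_inv]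
  ring

include hp1 hψ hmean in
lemma S1_zero : ∑ i, ∑ j, p i * (p j * Yc v c1 i j) = 0 := by
  rw [Finset.sum_congr rfl fun i _ => by
    rw [← Finset.mul_sum, sum_p_Yrow p v ψ c1 hp1 hmean i,
      ← uY_eq p v ψ c1 hp1 hmean i]]
  exact sum_p_uY p v ψ c1 hp1 hψ hmean

include hψ hmean in
lemma m2_eq : ∑ i, ∑ j, p i * (p j * fdot v i j) = (c1 ^ 2)⁻¹ := by
  rw [Finset.sum_congr rfl fun i _ => by
    rw [← Finset.mul_sum, sum_p_fdot p v ψ c1 hmean i]]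
  have : ∀ i : J, p i * (c1⁻¹ * rr v ψ i) = c1⁻¹ * (p i * rr v ψ i) := fun i => by ring
  rw [Finset.sum_congr rfl fun i _ => this i, ← Finset.mul_sum,
    sum_p_rr p v ψ c1 hψ hmean, sq, mul_inv]

lemma sum_mulVec' {τ : Type*} (s : Finset τ) (M : τ → Matrix (Fin d) (Fin d) ℂ)
    (x : Fin d → ℂ) : (∑ j ∈ s, M j) *ᵥ x = ∑ j ∈ s, M j *ᵥ x := by
  funext i
  simp only [Matrix.mulVec, dotProduct, Matrix.sum_apply, Finset.sum_apply,
    Finset.sum_mul]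
  exact Finset.sum_comm

lemma dyad_mulVec (w x : Fin d → ℂ) : dyadM w w *ᵥ x = (star w ⬝ᵥ x) • w := by
  funext i
  simp only [dyadM, Matrix.mulVec, dotProduct, Matrix.vecMulVec_apply, Pi.smul_apply,
    Pi.star_apply, smul_eq_mul, Finset.sum_mul]
  exact Finset.sum_congr rfl fun x' _ => by ring

lemma Cconst_eq : Cconst p v ψ c1 = c1 ^ 2 * ∑ j, p j * Complex.normSq (star ψ ⬝ᵥ v j) := by
  unfold Cconst
  congr 1
  rw [sum_mulVec', dot_sum_right, Complex.re_sum]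
  refine Finset.sum_congr rfl fun j _ => ?_
  rw [Matrix.smul_mulVec, dyad_mulVec]
  have h1 : star ψ ⬝ᵥ ((p j : ℂ) • ((star (v j) ⬝ᵥ ψ) • v j))
      = (p j : ℂ) * ((star ψ ⬝ᵥ v j) * (star (v j) ⬝ᵥ ψ)) := by
    rw [dotProduct_smul, dotProduct_smul]
    simp only [smul_eq_mul]; ring
  rw [h1]
  have h2 : star (v j) ⬝ᵥ ψ = star (star ψ ⬝ᵥ v j) := Matrix.star_dotProduct _ _
  rw [h2, show star (star ψ ⬝ᵥ v j) = (starRingEnd ℂ) (star ψ ⬝ᵥ v j) from rfl,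
    Complex.mul_conj, Complex.re_ofReal_mul, Complex.ofReal_re]

end scalarFacts

/-! ### counting lemmas -/

lemma count_diag (k : ℕ) (x y : ℝ) :
    ∑ q : Fin k × Fin k, (if q.1 = q.2 then x else y)
      = (k : ℝ) * x + ((k : ℝ) ^ 2 - (k : ℝ)) * y := by
  rw [Fintype.sum_prod_type]
  have h1 : ∀ α : Fin k, (∑ β : Fin k, if α = β then x else y) = x + ((k : ℝ) - 1) * y := by
    intro α
    have h0 : ∀ β : Fin k, (if α = β then x else y) = y + (if α = β then x - y else 0) := by
      intro β; split_ifs <;> ring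
    rw [Finset.sum_congr rfl fun β _ => h0 β, Finset.sum_add_distrib, Finset.sum_const,
      Finset.sum_ite_eq _ α (fun _ => x - y), if_pos (Finset.mem_univ α)]
    simp [Finset.card_univ]
    ring
  rw [Finset.sum_congr rfl fun α _ => h1 α, Finset.sum_const]
  simp [Finset.card_univ]
  ring

lemma factor3 (p : J → ℝ) (G H : J → J → ℝ) :
    ∑ i, ∑ j, ∑ l, p i * (p j * (p l * (G i j * H i l)))
      = ∑ i, p i * ((∑ j, p j * G i j) * (∑ l, p l * H i l)) := by
  refine Finset.sum_congr rfl fun i _ => ?_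
  rw [Finset.sum_mul_sum, Finset.mul_sum]
  refine Finset.sum_congr rfl fun j _ => ?_
  rw [Finset.mul_sum]
  exact Finset.sum_congr rfl fun l _ => by ring

lemma factor4 (p : J → ℝ) (G H : J → J → ℝ) :
    ∑ i, ∑ j, ∑ l, ∑ o, p i * (p j * (p l * (p o * (G i j * H l o))))
      = (∑ i, ∑ j, p i * (p j * G i j)) * (∑ l, ∑ o, p l * (p o * H l o)) := by
  rw [Finset.sum_mul]
  refine Finset.sum_congr rfl fun i _ => ?_
  rw [Finset.sum_mul]
  refine Finset.sum_congr rfl fun j _ => ?_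
  rw [Finset.mul_sum]
  refine Finset.sum_congr rfl fun l _ => ?_
  rw [Finset.mul_sum]
  exact Finset.sum_congr rfl fun o _ => by ring

lemma count_pos11 (k : ℕ) :
    ∑ q : Fin k × Fin k, ∑ r : Fin k × Fin k, (if q.1 = r.1 then (1:ℝ) else 0) = (k:ℝ)^3 := by
  simp only [Fintype.sum_prod_type]
  simp only [Finset.sum_const, Finset.card_univ, Fintype.card_fin, nsmul_eq_mul, mul_ite, mul_one,
    mul_zero, Finset.sum_ite_eq, Finset.mem_univ, if_true, Finset.sum_boole]
  simp [apply_ite]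
  push_cast
  ring

lemma count_pos12 (k : ℕ) :
    ∑ q : Fin k × Fin k, ∑ r : Fin k × Fin k, (if q.1 = r.2 then (1:ℝ) else 0) = (k:ℝ)^3 := by
  simp only [Fintype.sum_prod_type]
  simp only [Finset.sum_const, Finset.card_univ, Fintype.card_fin, nsmul_eq_mul, mul_ite, mul_one,
    mul_zero, Finset.sum_ite_eq, Finset.mem_univ, if_true]
  push_cast
  ring

lemma count_pos21 (k : ℕ) :
    ∑ q : Fin k × Fin k, ∑ r : Fin k × Fin k, (if q.2 = r.1 then (1:ℝ) else 0) = (k:ℝ)^3 := by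
  simp only [Fintype.sum_prod_type]
  simp only [Finset.sum_const, Finset.card_univ, Fintype.card_fin, nsmul_eq_mul, mul_ite, mul_one,
    mul_zero, Finset.sum_ite_eq, Finset.mem_univ, if_true, Finset.sum_boole]
  simp [apply_ite]
  push_cast
  ring

lemma count_pos22 (k : ℕ) :
    ∑ q : Fin k × Fin k, ∑ r : Fin k × Fin k, (if q.2 = r.2 then (1:ℝ) else 0) = (k:ℝ)^3 := by
  simp only [Fintype.sum_prod_type]
  simp only [Finset.sum_const, Finset.card_univ, Fintype.card_fin, nsmul_eq_mul, mul_ite, mul_one,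
    mul_zero, Finset.sum_ite_eq, Finset.mem_univ, if_true]
  push_cast
  ring

lemma count_eqq (k : ℕ) :
    ∑ q : Fin k × Fin k, ∑ r : Fin k × Fin k, (if q = r then (1:ℝ) else 0) = (k:ℝ)^2 := by
  simp only [Finset.sum_ite_eq, Finset.mem_univ, if_true, Finset.sum_const, Finset.card_univ,
    Fintype.card_fin, nsmul_eq_mul, Fintype.card_prod]
  push_cast
  ring

lemma count_swap (k : ℕ) :
    ∑ q : Fin k × Fin k, ∑ r : Fin k × Fin k, (if q = (r.2, r.1) then (1:ℝ) else 0)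
      = (k:ℝ)^2 := by
  have hcond : ∀ q r : Fin k × Fin k, (q = (r.2, r.1)) ↔ (r = (q.2, q.1)) := by
    intro q r
    constructor
    · intro h; subst h; simp
    · intro h; subst h; simp
  have hpt : ∀ q r : Fin k × Fin k, (if q = (r.2, r.1) then (1:ℝ) else 0)
      = (if r = (q.2, q.1) then (1:ℝ) else 0) := fun q r => if_congr (hcond q r) rfl rfl
  rw [Finset.sum_congr rfl fun q _ => Finset.sum_congr rfl fun r _ => hpt q r]
  simp only [Finset.sum_ite_eq', Finset.mem_univ, if_true, Finset.sum_const, Finset.card_univ,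
    Fintype.card_fin, nsmul_eq_mul, Fintype.card_prod]
  push_cast
  ring

end SparsifyAux

/-- **Sparsification mean and variance bound.**  Let `|Ω⟩ = (‖c‖₁/k)·Σ_α|ω_α⟩`
with `|ω_α⟩` i.i.d. random unit vectors (finitely many values, single-sample
distribution `p`, values `v`) satisfying `E[|ω_α⟩] = |ψ⟩/‖c‖₁` for a unit vector
`ψ`.  Then `E[⟨Ω|Ω⟩] = 1 + (‖c‖₁² − 1)/k` and
`Var[⟨Ω|Ω⟩] ≤ 4(C−1)/k + 2‖c‖₁⁴/k² + O(C/k³)` with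
`C = ‖c‖₁²·⟨ψ|σ|ψ⟩`, `σ = E[|ω_α⟩⟨ω_α|]`. -/
theorem sparsification_mean_and_variance {d : ℕ} {J : Type*} [Fintype J]
    (p : J → ℝ) (v : J → Fin d → ℂ) (ψ : Fin d → ℂ) (c1 : ℝ)
    (hp : ∀ j, 0 ≤ p j) (hp1 : ∑ j, p j = 1)
    (hv : ∀ j, nsq (v j) = 1) (hψ : nsq ψ = 1) (hc1 : 1 ≤ c1)
    (hmean : ∑ j, (p j : ℂ) • v j = ((c1 : ℂ))⁻¹ • ψ) :
    (∀ k : ℕ, 1 ≤ k → meanNsq p c1 k v = 1 + (c1 ^ 2 - 1) / (k : ℝ)) ∧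
    ∃ Kbig : ℝ, ∀ k : ℕ, 1 ≤ k →
      varNsq p c1 k v ≤ 4 * (Cconst p v ψ c1 - 1) / (k : ℝ) +
        2 * c1 ^ 4 / (k : ℝ) ^ 2 + Kbig * Cconst p v ψ c1 / (k : ℝ) ^ 3 := by
  classical
  have hc0 : (0:ℝ) < c1 := lt_of_lt_of_le one_pos hc1
  have hc0' : c1 ≠ 0 := ne_of_gt hc0
  set A := SparsifyAux.Aq p v c1 with hA_def
  set B := SparsifyAux.Bq p v c1 with hB_def
  have hA0 : 0 ≤ A := Finset.sum_nonneg fun i _ => mul_nonneg (hp i) (sq_nonneg _)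
  have hB0 : 0 ≤ B := Finset.sum_nonneg fun i _ => Finset.sum_nonneg fun j _ =>
    mul_nonneg (hp i) (mul_nonneg (hp j) (sq_nonneg _))
  have hfsq : ∀ i j, SparsifyAux.fdot v i j ^ 2 ≤ 1 := fun i j =>
    le_trans (SparsifyAux.re_sq_le_normSq _) (SparsifyAux.cs_bound (v i) (v j) (hv i) (hv j))
  have hrowu : ∀ i, (∑ j, p j * SparsifyAux.Yc v c1 i j) = SparsifyAux.uY p v c1 i := by
    intro i
    rw [SparsifyAux.sum_p_Yrow p v ψ c1 hp1 hmean i, ← SparsifyAux.uY_eq p v ψ c1 hp1 hmean i]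
  -- bound c1^4 * A ≤ C - 1
  have hAC : c1 ^ 4 * A ≤ Cconst p v ψ c1 - 1 := by
    set S := ∑ i, p i * SparsifyAux.rr v ψ i ^ 2 with hS_def
    set T := ∑ i, p i * Complex.normSq (star ψ ⬝ᵥ v i) with hT_def
    have hST : S ≤ T := Finset.sum_le_sum fun i _ =>
      mul_le_mul_of_nonneg_left (SparsifyAux.re_sq_le_normSq _) (hp i)
    have hCeq : Cconst p v ψ c1 = c1 ^ 2 * T := SparsifyAux.Cconst_eq p v ψ c1
    have hAe2 : A = (c1 ^ 2)⁻¹ * S - (c1 ^ 4)⁻¹ := by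
      rw [hA_def]
      unfold SparsifyAux.Aq
      rw [Finset.sum_congr rfl fun i _ => by rw [SparsifyAux.uY_eq p v ψ c1 hp1 hmean i]]
      have hpt : ∀ i, p i * (c1⁻¹ * SparsifyAux.rr v ψ i - (c1 ^ 2)⁻¹) ^ 2
          = (c1 ^ 2)⁻¹ * (p i * SparsifyAux.rr v ψ i ^ 2)
            - (2 * (c1 ^ 3)⁻¹) * (p i * SparsifyAux.rr v ψ i) + (c1 ^ 4)⁻¹ * p i := by
        intro i
        field_simp
        ring
      rw [Finset.sum_congr rfl fun i _ => hpt i, Finset.sum_add_distrib,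
        Finset.sum_sub_distrib, ← Finset.mul_sum, ← Finset.mul_sum, ← Finset.mul_sum,
        SparsifyAux.sum_p_rr p v ψ c1 hψ hmean, hp1, mul_one, ← hS_def]
      field_simp
      ring
    have hkey : c1 ^ 4 * A = c1 ^ 2 * S - 1 := by
      rw [hAe2]
      field_simp
    have : c1 ^ 2 * S ≤ c1 ^ 2 * T := mul_le_mul_of_nonneg_left hST (by positivity)
    rw [hkey, hCeq]
    linarith
  -- bound B ≤ 1
  have hBle : B ≤ 1 := by
    have hpp : ∑ i, ∑ j, p i * p j = 1 := by
      rw [← Finset.sum_mul_sum, hp1, mul_one]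
    have hm2 := SparsifyAux.m2_eq p v ψ c1 hψ hmean
    have hpt : ∀ i j : J, p i * (p j * SparsifyAux.Yc v c1 i j ^ 2)
        = p i * (p j * SparsifyAux.fdot v i j ^ 2)
          - (2 * (c1 ^ 2)⁻¹) * (p i * (p j * SparsifyAux.fdot v i j))
          + ((c1 ^ 2)⁻¹) ^ 2 * (p i * p j) := by
      intro i j
      unfold SparsifyAux.Yc
      ring
    have hBe : B = (∑ i, ∑ j, p i * (p j * SparsifyAux.fdot v i j ^ 2)) - ((c1 ^ 2)⁻¹) ^ 2 := by
      rw [hB_def]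
      unfold SparsifyAux.Bq
      have h1 : ∀ i : J, ∑ j, p i * (p j * SparsifyAux.Yc v c1 i j ^ 2)
          = (∑ j, p i * (p j * SparsifyAux.fdot v i j ^ 2))
            - (2 * (c1 ^ 2)⁻¹) * (∑ j, p i * (p j * SparsifyAux.fdot v i j))
            + ((c1 ^ 2)⁻¹) ^ 2 * (∑ j, p i * p j) := by
        intro i
        rw [Finset.sum_congr rfl fun j _ => hpt i j, Finset.sum_add_distrib,
          Finset.sum_sub_distrib]
        simp only [← Finset.mul_sum]
      rw [Finset.sum_congr rfl fun i _ => h1 i, Finset.sum_add_distrib,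
        Finset.sum_sub_distrib, ← Finset.mul_sum, ← Finset.mul_sum, hm2, hpp]
      ring
    have hff : (∑ i, ∑ j, p i * (p j * SparsifyAux.fdot v i j ^ 2)) ≤ 1 := by
      rw [← hpp]
      refine Finset.sum_le_sum fun i _ => Finset.sum_le_sum fun j _ => ?_
      calc p i * (p j * SparsifyAux.fdot v i j ^ 2) ≤ p i * (p j * 1) :=
            mul_le_mul_of_nonneg_left (mul_le_mul_of_nonneg_left (hfsq i j) (hp j)) (hp i)
        _ = p i * p j := by ring
    nlinarith [hBe, hff, sq_nonneg ((c1 ^ 2)⁻¹)]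
  -- the squared norm as a double sum
  have hnsq_sp : ∀ (k : ℕ), 1 ≤ k → ∀ g : Fin k → J, nsq (sparseVec c1 k v g)
      = c1 ^ 2 / (k:ℝ) ^ 2 * ∑ q : Fin k × Fin k, SparsifyAux.fdot v (g q.1) (g q.2) := by
    intro k hk g
    have hK0 : (0:ℝ) < (k:ℝ) := by exact_mod_cast hk
    unfold nsq sparseVec
    set z : ℂ := (c1 : ℂ) / (k : ℂ) with hz_def
    set w : Fin d → ℂ := ∑ α, v (g α) with hw_def
    have h1 : star (z • w) ⬝ᵥ (z • w) = (starRingEnd ℂ) z * z * (star w ⬝ᵥ w) := by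
      rw [star_smul, smul_dotProduct, dotProduct_smul]
      simp only [smul_eq_mul, Complex.star_def]
      ring
    have h2 : (starRingEnd ℂ) z * z = ((c1 ^ 2 / (k:ℝ) ^ 2 : ℝ) : ℂ) := by
      have hz : z = ((c1 / (k:ℝ) : ℝ) : ℂ) := by
        rw [hz_def]
        push_cast
        ring
      rw [hz, Complex.conj_ofReal, ← Complex.ofReal_mul]
      congr 1
      field_simp
    have h3 : star w ⬝ᵥ w = ∑ α, ∑ β, star (v (g α)) ⬝ᵥ v (g β) := by
      rw [hw_def, star_sum, SparsifyAux.dot_sum_left]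
      exact Finset.sum_congr rfl fun α _ => SparsifyAux.dot_sum_right _ _ _
    rw [h1, h2, h3, Complex.re_ofReal_mul]
    congr 1
    rw [Fintype.sum_prod_type, Complex.re_sum]
    exact Finset.sum_congr rfl fun α _ => (Complex.re_sum _ _).symm ▸ rfl
  -- the mean, unsimplified form
  have hmean0 : ∀ (k : ℕ), 1 ≤ k → meanNsq p c1 k v
      = c1 ^ 2 / (k:ℝ) ^ 2 * ((k:ℝ) * 1 + ((k:ℝ) ^ 2 - (k:ℝ)) * (c1 ^ 2)⁻¹) := by
    intro k hk
    have hEq : meanNsq p c1 k v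
        = SparsifyAux.Ex p (fun g : Fin k → J => nsq (sparseVec c1 k v g)) := rfl
    rw [hEq, SparsifyAux.Ex_congr p (fun g => hnsq_sp k hk g),
      SparsifyAux.Ex_mul_left p (c1 ^ 2 / (k:ℝ) ^ 2)
        (fun g => ∑ q : Fin k × Fin k, SparsifyAux.fdot v (g q.1) (g q.2)),
      SparsifyAux.Ex_sum p Finset.univ
        (fun (q : Fin k × Fin k) (g : Fin k → J) => SparsifyAux.fdot v (g q.1) (g q.2))]
    congr 1
    have hq : ∀ q : Fin k × Fin k,
        SparsifyAux.Ex p (fun g : Fin k → J => SparsifyAux.fdot v (g q.1) (g q.2))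
          = if q.1 = q.2 then (1:ℝ) else (c1 ^ 2)⁻¹ := by
      intro q
      by_cases hqq : q.1 = q.2
      · rw [if_pos hqq, hqq, SparsifyAux.Ex_marg1 p hp1 q.2 (fun i => SparsifyAux.fdot v i i),
          Finset.sum_congr rfl fun i _ => by rw [SparsifyAux.fdot_diag v hv i, mul_one]]
        exact hp1
      · rw [if_neg hqq, SparsifyAux.Ex_marg2 p hp1 hqq (SparsifyAux.fdot v)]
        exact SparsifyAux.m2_eq p v ψ c1 hψ hmean
    rw [Finset.sum_congr rfl fun q _ => hq q]
    exact SparsifyAux.count_diag k 1 (c1 ^ 2)⁻¹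
  have hmeanF : ∀ k : ℕ, 1 ≤ k → meanNsq p c1 k v = 1 + (c1 ^ 2 - 1) / (k : ℝ) := by
    intro k hk
    have hK0 : (0:ℝ) < (k:ℝ) := by exact_mod_cast hk
    rw [hmean0 k hk]
    field_simp
    ring
  refine ⟨hmeanF, 0, ?_⟩
  intro k hk
  have hK0 : (0:ℝ) < (k:ℝ) := by exact_mod_cast hk
  -- centered variable
  have hdiff : ∀ g : Fin k → J, nsq (sparseVec c1 k v g) - meanNsq p c1 k v
      = c1 ^ 2 / (k:ℝ) ^ 2 * ∑ q : Fin k × Fin k, SparsifyAux.Zf v c1 g q := by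
    intro g
    rw [hnsq_sp k hk g, hmean0 k hk, ← mul_sub]
    congr 1
    have hpt : ∀ q : Fin k × Fin k, SparsifyAux.fdot v (g q.1) (g q.2)
        = SparsifyAux.Zf v c1 g q + (if q.1 = q.2 then (1:ℝ) else (c1 ^ 2)⁻¹) := by
      intro q
      unfold SparsifyAux.Zf
      by_cases hqq : q.1 = q.2
      · rw [if_pos hqq, if_pos hqq, hqq, SparsifyAux.fdot_diag v hv, zero_add]
      · rw [if_neg hqq, if_neg hqq]
        unfold SparsifyAux.Yc
        ring
    rw [Finset.sum_congr rfl fun q _ => hpt q, Finset.sum_add_distrib,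
      SparsifyAux.count_diag k 1 (c1 ^ 2)⁻¹]
    ring
  -- the variance as a double sum of pair-pair expectations
  have hvar : varNsq p c1 k v = (c1 ^ 2 / (k:ℝ) ^ 2) ^ 2 *
      ∑ q : Fin k × Fin k, ∑ r : Fin k × Fin k,
        SparsifyAux.Ex p (fun g => SparsifyAux.Zf v c1 g q * SparsifyAux.Zf v c1 g r) := by
    have hEq : varNsq p c1 k v = SparsifyAux.Ex p
        (fun g : Fin k → J => (nsq (sparseVec c1 k v g) - meanNsq p c1 k v) ^ 2) := rfl
    rw [hEq, SparsifyAux.Ex_congr p (G := fun g : Fin k → J => (c1 ^ 2 / (k:ℝ) ^ 2) ^ 2 *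
        ∑ q : Fin k × Fin k, ∑ r : Fin k × Fin k,
          SparsifyAux.Zf v c1 g q * SparsifyAux.Zf v c1 g r)
      (fun g => by rw [hdiff g, mul_pow, pow_two (∑ q : Fin k × Fin k, SparsifyAux.Zf v c1 g q),
        Finset.sum_mul_sum]),
      SparsifyAux.Ex_mul_left, SparsifyAux.Ex_sum]
    congr 1
    exact Finset.sum_congr rfl fun q _ => SparsifyAux.Ex_sum p Finset.univ _
  -- pointwise bound on pair-pair expectations
  have hTT : ∀ q r : Fin k × Fin k,
      SparsifyAux.Ex p (fun g => SparsifyAux.Zf v c1 g q * SparsifyAux.Zf v c1 g r)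
        ≤ SparsifyAux.Gb p v c1 q r := by
    intro q r
    obtain ⟨α, β⟩ := q
    obtain ⟨μ, ν⟩ := r
    have hite0 : ∀ (P : Prop) (inst : Decidable P), (0:ℝ) ≤ (if P then 1 else 0) := by
      intro P inst; split_ifs <;> norm_num
    have hGb0 : 0 ≤ SparsifyAux.Gb p v c1 (α, β) (μ, ν) := by
      unfold SparsifyAux.Gb
      refine add_nonneg (mul_nonneg ?_ hA0) (mul_nonneg ?_ hB0)
      · exact add_nonneg (add_nonneg (add_nonneg (hite0 _ _) (hite0 _ _)) (hite0 _ _)) (hite0 _ _)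
      · exact add_nonneg (hite0 _ _) (hite0 _ _)
    by_cases hq : α = β
    · have hZ : ∀ g : Fin k → J,
          SparsifyAux.Zf v c1 g (α, β) * SparsifyAux.Zf v c1 g (μ, ν) = 0 := by
        intro g; simp [SparsifyAux.Zf, hq]
      rw [SparsifyAux.Ex_congr p hZ, SparsifyAux.Ex_const p hp1]
      exact hGb0
    by_cases hr : μ = ν
    · have hZ : ∀ g : Fin k → J,
          SparsifyAux.Zf v c1 g (α, β) * SparsifyAux.Zf v c1 g (μ, ν) = 0 := by
        intro g; simp [SparsifyAux.Zf, hr]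
      rw [SparsifyAux.Ex_congr p hZ, SparsifyAux.Ex_const p hp1]
      exact hGb0
    have hZZ : ∀ g : Fin k → J,
        SparsifyAux.Zf v c1 g (α, β) * SparsifyAux.Zf v c1 g (μ, ν)
          = SparsifyAux.Yc v c1 (g α) (g β) * SparsifyAux.Yc v c1 (g μ) (g ν) := by
      intro g; simp [SparsifyAux.Zf, hq, hr]
    rw [SparsifyAux.Ex_congr p hZZ]
    by_cases h1 : α = μ
    · subst h1
      by_cases h2 : β = ν
      · subst h2
        have hEx : SparsifyAux.Ex p (fun g : Fin k → J =>
            SparsifyAux.Yc v c1 (g α) (g β) * SparsifyAux.Yc v c1 (g α) (g β)) = B := by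
          rw [SparsifyAux.Ex_marg2 p hp1 hq
            (fun i j => SparsifyAux.Yc v c1 i j * SparsifyAux.Yc v c1 i j), hB_def]
          unfold SparsifyAux.Bq
          exact Finset.sum_congr rfl fun i _ => Finset.sum_congr rfl fun j _ => by ring
        rw [hEx]
        have hGbeq : SparsifyAux.Gb p v c1 (α, β) (α, β) = 2 * A + B := by
          simp only [SparsifyAux.Gb, Prod.mk.injEq, eq_self_iff_true, hq, Ne.symm hq,
            if_true, if_false, and_self, and_true, true_and, and_false, false_and,
            ← hA_def, ← hB_def]
          ring
        rw [hGbeq]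
        linarith
      · have hd2 : α ≠ ν := hr
        have hEx : SparsifyAux.Ex p (fun g : Fin k → J =>
            SparsifyAux.Yc v c1 (g α) (g β) * SparsifyAux.Yc v c1 (g α) (g ν)) = A := by
          rw [SparsifyAux.Ex_marg3 p hp1 hq hd2 h2
            (fun i j l => SparsifyAux.Yc v c1 i j * SparsifyAux.Yc v c1 i l),
            SparsifyAux.factor3 p (SparsifyAux.Yc v c1) (SparsifyAux.Yc v c1), hA_def]
          unfold SparsifyAux.Aq
          refine Finset.sum_congr rfl fun i _ => ?_
          rw [hrowu i]
          ring
        rw [hEx]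
        have hGbeq : SparsifyAux.Gb p v c1 (α, β) (α, ν) = A := by
          simp [SparsifyAux.Gb, hq, hd2, h2, Ne.symm hq, Prod.ext_iff, ← hA_def]
        rw [hGbeq]
    · by_cases h3 : α = ν
      · subst h3
        by_cases h4 : β = μ
        · subst h4
          have hEx : SparsifyAux.Ex p (fun g : Fin k → J =>
              SparsifyAux.Yc v c1 (g α) (g β) * SparsifyAux.Yc v c1 (g β) (g α)) = B := by
            rw [SparsifyAux.Ex_marg2 p hp1 hq
              (fun i j => SparsifyAux.Yc v c1 i j * SparsifyAux.Yc v c1 j i), hB_def]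
            unfold SparsifyAux.Bq
            refine Finset.sum_congr rfl fun i _ => Finset.sum_congr rfl fun j _ => ?_
            rw [SparsifyAux.Yc_symm v c1 j i]
            ring
          rw [hEx]
          have hGbeq : SparsifyAux.Gb p v c1 (α, β) (β, α) = 2 * A + B := by
            simp only [SparsifyAux.Gb, Prod.mk.injEq, eq_self_iff_true, hq, Ne.symm hq,
              if_true, if_false, and_self, and_true, true_and, and_false, false_and,
              ← hA_def, ← hB_def]
            ring
          rw [hGbeq]
          linarith
        · have hEx : SparsifyAux.Ex p (fun g : Fin k → J =>
              SparsifyAux.Yc v c1 (g α) (g β) * SparsifyAux.Yc v c1 (g μ) (g α)) = A := by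
            rw [SparsifyAux.Ex_marg3 p hp1 hq h1 h4
              (fun i j l => SparsifyAux.Yc v c1 i j * SparsifyAux.Yc v c1 l i),
              SparsifyAux.factor3 p (SparsifyAux.Yc v c1) (fun i l => SparsifyAux.Yc v c1 l i),
              hA_def]
            unfold SparsifyAux.Aq
            refine Finset.sum_congr rfl fun i _ => ?_
            rw [hrowu i, show (∑ l, p l * SparsifyAux.Yc v c1 l i) = SparsifyAux.uY p v c1 i
              from rfl]
            ring
          rw [hEx]
          have hGbeq : SparsifyAux.Gb p v c1 (α, β) (μ, α) = A := by
            simp [SparsifyAux.Gb, hq, h1, h4, Ne.symm hq, Prod.ext_iff, ← hA_def]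
          rw [hGbeq]
      · by_cases h5 : β = μ
        · subst h5
          have hβα : β ≠ α := Ne.symm hq
          have hEx : SparsifyAux.Ex p (fun g : Fin k → J =>
              SparsifyAux.Yc v c1 (g α) (g β) * SparsifyAux.Yc v c1 (g β) (g ν)) = A := by
            rw [SparsifyAux.Ex_marg3 p hp1 hβα hr h3
              (fun i j l => SparsifyAux.Yc v c1 j i * SparsifyAux.Yc v c1 i l),
              SparsifyAux.factor3 p (fun i j => SparsifyAux.Yc v c1 j i) (SparsifyAux.Yc v c1),
              hA_def]
            unfold SparsifyAux.Aq
            refine Finset.sum_congr rfl fun i _ => ?_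
            rw [hrowu i, show (∑ j, p j * SparsifyAux.Yc v c1 j i) = SparsifyAux.uY p v c1 i
              from rfl]
            ring
          rw [hEx]
          have hGbeq : SparsifyAux.Gb p v c1 (α, β) (β, ν) = A := by
            simp [SparsifyAux.Gb, hq, h3, hr, Ne.symm hq, Prod.ext_iff, ← hA_def]
          rw [hGbeq]
        · by_cases h6 : β = ν
          · subst h6
            have hβα : β ≠ α := Ne.symm hq
            have hEx : SparsifyAux.Ex p (fun g : Fin k → J =>
                SparsifyAux.Yc v c1 (g α) (g β) * SparsifyAux.Yc v c1 (g μ) (g β)) = A := by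
              rw [SparsifyAux.Ex_marg3 p hp1 hβα h5 h1
                (fun i j l => SparsifyAux.Yc v c1 j i * SparsifyAux.Yc v c1 l i),
                SparsifyAux.factor3 p (fun i j => SparsifyAux.Yc v c1 j i)
                  (fun i l => SparsifyAux.Yc v c1 l i), hA_def]
              unfold SparsifyAux.Aq
              refine Finset.sum_congr rfl fun i _ => ?_
              rw [show (∑ j, p j * SparsifyAux.Yc v c1 j i) = SparsifyAux.uY p v c1 i from rfl]
              ring
            rw [hEx]
            have hGbeq : SparsifyAux.Gb p v c1 (α, β) (μ, β) = A := by
              simp [SparsifyAux.Gb, hq, h1, h5, Ne.symm hq, Prod.ext_iff, ← hA_def]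
            rw [hGbeq]
          · have hEx : SparsifyAux.Ex p (fun g : Fin k → J =>
                SparsifyAux.Yc v c1 (g α) (g β) * SparsifyAux.Yc v c1 (g μ) (g ν)) = 0 := by
              rw [SparsifyAux.Ex_marg4 p hp1 hq h1 h3 h5 h6 hr
                (fun i j l o => SparsifyAux.Yc v c1 i j * SparsifyAux.Yc v c1 l o),
                SparsifyAux.factor4 p (SparsifyAux.Yc v c1) (SparsifyAux.Yc v c1),
                SparsifyAux.S1_zero p v ψ c1 hp1 hψ hmean, mul_zero]
            rw [hEx]
            exact hGb0
  -- total of the bound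
  have hGb : ∑ q : Fin k × Fin k, ∑ r : Fin k × Fin k, SparsifyAux.Gb p v c1 q r
      = 4 * (k:ℝ) ^ 3 * A + 2 * (k:ℝ) ^ 2 * B := by
    simp only [SparsifyAux.Gb, add_mul, Finset.sum_add_distrib, ← Finset.sum_mul]
    rw [SparsifyAux.count_pos11 k, SparsifyAux.count_pos12 k, SparsifyAux.count_pos21 k,
      SparsifyAux.count_pos22 k, SparsifyAux.count_eqq k, SparsifyAux.count_swap k,
      ← hA_def, ← hB_def]
    ring
  -- put it together
  have hsum_le : ∑ q : Fin k × Fin k, ∑ r : Fin k × Fin k,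
      SparsifyAux.Ex p (fun g => SparsifyAux.Zf v c1 g q * SparsifyAux.Zf v c1 g r)
        ≤ 4 * (k:ℝ) ^ 3 * A + 2 * (k:ℝ) ^ 2 * B := by
    rw [← hGb]
    exact Finset.sum_le_sum fun q _ => Finset.sum_le_sum fun r _ => hTT q r
  have hstep : varNsq p c1 k v ≤ (c1 ^ 2 / (k:ℝ) ^ 2) ^ 2 *
      (4 * (k:ℝ) ^ 3 * A + 2 * (k:ℝ) ^ 2 * B) := by
    rw [hvar]
    exact mul_le_mul_of_nonneg_left hsum_le (by positivity)
  have hid : (c1 ^ 2 / (k:ℝ) ^ 2) ^ 2 * (4 * (k:ℝ) ^ 3 * A + 2 * (k:ℝ) ^ 2 * B)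
      = 4 * (c1 ^ 4 * A) / (k:ℝ) + 2 * c1 ^ 4 * B / (k:ℝ) ^ 2 := by
    field_simp
  have h1 : 4 * (c1 ^ 4 * A) / (k:ℝ) ≤ 4 * (Cconst p v ψ c1 - 1) / (k:ℝ) :=
    (div_le_div_iff_of_pos_right hK0).mpr (by linarith)
  have h2 : 2 * c1 ^ 4 * B / (k:ℝ) ^ 2 ≤ 2 * c1 ^ 4 / (k:ℝ) ^ 2 := by
    apply (div_le_div_iff_of_pos_right (by positivity)).mpr
    nlinarith [pow_nonneg (le_of_lt hc0) 4]
  calc varNsq p c1 k v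
      ≤ (c1 ^ 2 / (k:ℝ) ^ 2) ^ 2 * (4 * (k:ℝ) ^ 3 * A + 2 * (k:ℝ) ^ 2 * B) := hstep
    _ = 4 * (c1 ^ 4 * A) / (k:ℝ) + 2 * c1 ^ 4 * B / (k:ℝ) ^ 2 := hid
    _ ≤ 4 * (Cconst p v ψ c1 - 1) / (k : ℝ) +
        2 * c1 ^ 4 / (k : ℝ) ^ 2 + 0 * Cconst p v ψ c1 / (k : ℝ) ^ 3 := by
        rw [zero_mul, zero_div, add_zero]
        linarith
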